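/- With P_n(x;q) as above, the coefficient a_{n;k}(q) of (−1)^k x^{n−2k} in P_n(x;q) is given by a_{n;k} = Σ q^{n(n+1)/2 − c(j₁,…,j_k)}, where the sum runs over all sequences 1 ≤ j₁ ≪ j₂ ≪ ⋯ ≪ j_k ≤ n−1 (where i ≪ j means i < j − 1) and c(j₁,…,j_k) = Σ_{r=1}^k (2j_r + 1). -/

import Mathlib

open Polynomial Finset

def Fam (n k : ℕ) : Finset (Finset ℕ) :=
  (Finset.Icc 1 (n - 1)).powerset.filter
    (fun s => s.card = k ∧ ∀ i ∈ s, ∀ j ∈ s, i < j → i + 1 < j)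

noncomputable def aP (n k : ℕ) : Polynomial ℤ :=
  ∑ s ∈ Fam n k, (X : Polynomial ℤ) ^ (n * (n + 1) / 2 - ∑ j ∈ s, (2 * j + 1))

lemma csum_bound (m : ℕ) : ∀ s : Finset ℕ, s ⊆ Finset.Icc 1 m →
    (∀ i ∈ s, ∀ j ∈ s, i < j → i + 1 < j) →
    (∑ j ∈ s, (2 * j + 1)) ≤ (m + 1) * (m + 2) / 2 := by
  induction m using Nat.strong_induction_on with
  | _ m IH =>
    match m with
    | 0 =>
      intro s hs _
      have : s = ∅ := by simpa using hs
      simp [this]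
    | 1 =>
      intro s hs _
      calc ∑ j ∈ s, (2*j+1) ≤ ∑ j ∈ Finset.Icc 1 1, (2*j+1) :=
            Finset.sum_le_sum_of_subset hs
        _ ≤ (1+1)*(1+2)/2 := by simp
    | (m+2) =>
      intro s hs hadj
      by_cases h : m + 2 ∈ s
      · have hm1 : m + 1 ∉ s := fun hc => by
          have := hadj _ hc _ h (by omega); omega
        have ht : s.erase (m+2) ⊆ Finset.Icc 1 m := by
          intro j hj
          have hj1 := Finset.mem_of_mem_erase hj
          have hj2 := Finset.ne_of_mem_erase hj
          have h3 := hs hj1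
          have h4 : j ≠ m+1 := fun e => hm1 (e ▸ hj1)
          simp only [Finset.mem_Icc] at h3 ⊢
          omega
        have hadj' : ∀ i ∈ s.erase (m+2), ∀ j ∈ s.erase (m+2), i < j → i + 1 < j :=
          fun i hi j hj => hadj i (Finset.mem_of_mem_erase hi) j (Finset.mem_of_mem_erase hj)
        have hIH := IH m (by omega) _ ht hadj'
        have hsum : ∑ j ∈ s.erase (m+2), (2*j+1) + (2*(m+2)+1) = ∑ j ∈ s, (2*j+1) :=
          Finset.sum_erase_add s _ h
        have e1 : (m + 1) * (m + 2) = m*m + 3*m + 2 := by ring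
        have e2 : (m + 2 + 1) * (m + 2 + 2) = m*m + 7*m + 12 := by ring
        omega
      · have hs' : s ⊆ Finset.Icc 1 (m+1) := by
          intro j hj
          have := hs hj
          have h4 : j ≠ m+2 := fun e => h (e ▸ hj)
          simp only [Finset.mem_Icc] at this ⊢
          omega
        have hIH := IH (m+1) (by omega) _ hs' hadj
        have e1 : (m + 1 + 1) * (m + 1 + 2) = m*m + 5*m + 6 := by ring
        have e2 : (m + 2 + 1) * (m + 2 + 2) = m*m + 7*m + 12 := by ring
        omega

lemma csum_bound' (n : ℕ) (s : Finset ℕ) (hs : s ⊆ Finset.Icc 1 (n-1))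
    (hadj : ∀ i ∈ s, ∀ j ∈ s, i < j → i + 1 < j) :
    (∑ j ∈ s, (2 * j + 1)) ≤ n * (n + 1) / 2 := by
  match n with
  | 0 =>
    have : s = ∅ := by simpa using hs
    simp [this]
  | (m+1) =>
    have := csum_bound m s (by simpa using hs) hadj
    have e : (m+1) * (m+1+1) = (m+1)*(m+2) := by ring
    omega

lemma mem_Fam (n k : ℕ) (s : Finset ℕ) :
    s ∈ Fam n k ↔ s ⊆ Finset.Icc 1 (n-1) ∧ s.card = k ∧
      ∀ i ∈ s, ∀ j ∈ s, i < j → i + 1 < j := by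
  simp [Fam, and_assoc]

lemma Fam_empty (n k : ℕ) (h : n / 2 < k) : Fam n k = ∅ := by
  rw [Finset.eq_empty_iff_forall_notMem]
  intro s hs
  rw [mem_Fam] at hs
  obtain ⟨hsub, hcard, hadj⟩ := hs
  have hle : s.card ≤ (Finset.Icc 1 (n/2)).card := by
    apply Finset.card_le_card_of_injOn (fun j => (j+1)/2)
    · intro j hj
      have := hsub hj
      simp only [Finset.mem_coe, Finset.mem_Icc] at this ⊢
      omega
    · intro i hi j hj hij
      rcases lt_trichotomy i j with hl | he | hl
      · have := hadj i hi j hj hl; simp only at hij; omega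
      · exact he
      · have := hadj j hj i hi hl; simp only at hij; omega
  rw [Nat.card_Icc] at hle
  omega

lemma aP_vanish (n k : ℕ) (h : n / 2 < k) : aP n k = 0 := by
  rw [aP, Fam_empty n k h, Finset.sum_empty]

lemma aP_zero (n : ℕ) : aP n 0 = X ^ (n * (n + 1) / 2) := by
  have : Fam n 0 = {∅} := by
    rw [Finset.eq_singleton_iff_unique_mem]
    constructor
    · simp [Fam]
    · intro s hs
      rw [mem_Fam] at hs
      exact Finset.card_eq_zero.mp hs.2.1
  rw [aP, this]
  simp

lemma aP_rec0 (n : ℕ) : aP (n+2) 0 = X ^ (n+2) * aP (n+1) 0 := by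
  rw [aP_zero, aP_zero, ← pow_add]
  congr 1
  have e1 : (n+2) * (n+2+1) = n*n + 5*n + 6 := by ring
  have e2 : (n+1) * (n+1+1) = n*n + 3*n + 2 := by ring
  omega

lemma aP_rec (n k : ℕ) :
    aP (n+2) (k+1) = X ^ (n+2) * aP (n+1) (k+1) + aP n k := by
  have hsplit := Finset.sum_filter_add_sum_filter_not (Fam (n+2) (k+1))
    (fun s => n+1 ∈ s)
    (fun s => (X : Polynomial ℤ) ^ ((n+2) * (n+2+1) / 2 - ∑ j ∈ s, (2 * j + 1)))
  rw [aP, ← hsplit]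
  have hsetA : (Fam (n+2) (k+1)).filter (fun s => ¬ n+1 ∈ s) = Fam (n+1) (k+1) := by
    ext s
    simp only [Finset.mem_filter, mem_Fam]
    constructor
    · rintro ⟨⟨hsub, hc, hadj⟩, hnot⟩
      refine ⟨?_, hc, hadj⟩
      intro j hj
      have h1 := hsub hj
      have h2 : j ≠ n+1 := fun e => hnot (e ▸ hj)
      simp only [Finset.mem_Icc] at h1 ⊢
      omega
    · rintro ⟨hsub, hc, hadj⟩
      have hnot : n+1 ∉ s := fun hc' => by
        have := hsub hc'; simp only [Finset.mem_Icc] at this; omega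
      refine ⟨⟨?_, hc, hadj⟩, hnot⟩
      intro j hj
      have := hsub hj
      simp only [Finset.mem_Icc] at this ⊢
      omega
  have hA : ∑ s ∈ (Fam (n+2) (k+1)).filter (fun s => ¬ n+1 ∈ s),
      (X : Polynomial ℤ) ^ ((n+2) * (n+2+1) / 2 - ∑ j ∈ s, (2 * j + 1))
      = X ^ (n+2) * aP (n+1) (k+1) := by
    rw [hsetA, aP, Finset.mul_sum]
    apply Finset.sum_congr rfl
    intro s hs
    rw [mem_Fam] at hs
    obtain ⟨hsub, hc, hadj⟩ := hs
    have hb := csum_bound' (n+1) s hsub hadj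
    rw [← pow_add]
    congr 1
    have e2 : (n+1) * (n+1+1) = n*n + 3*n + 2 := by ring
    have e3 : (n+2) * (n+2+1) = n*n + 5*n + 6 := by ring
    omega
  have hB : ∑ s ∈ (Fam (n+2) (k+1)).filter (fun s => n+1 ∈ s),
      (X : Polynomial ℤ) ^ ((n+2) * (n+2+1) / 2 - ∑ j ∈ s, (2 * j + 1))
      = aP n k := by
    rw [aP]
    apply Finset.sum_nbij' (i := fun s => s.erase (n+1)) (j := fun t => insert (n+1) t)
    · intro s hs
      simp only [Finset.mem_filter, mem_Fam] at hs
      obtain ⟨⟨hsub, hc, hadj⟩, hmem⟩ := hs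
      rw [mem_Fam]
      refine ⟨?_, ?_, ?_⟩
      · intro j hj
        have hj1 := Finset.mem_of_mem_erase hj
        have hj2 := Finset.ne_of_mem_erase hj
        have h1 := hsub hj1
        have h3 : j ≠ n := fun e => by
          have := hadj j hj1 (n+1) hmem (by omega); omega
        simp only [Finset.mem_Icc] at h1 ⊢
        omega
      · rw [Finset.card_erase_of_mem hmem, hc]; omega
      · intro i hi j hj
        exact hadj i (Finset.mem_of_mem_erase hi) j (Finset.mem_of_mem_erase hj)
    · intro t ht
      rw [mem_Fam] at ht
      obtain ⟨hsub, hc, hadj⟩ := ht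
      have hnot : n+1 ∉ t := fun hc' => by
        have := hsub hc'; simp only [Finset.mem_Icc] at this; omega
      simp only [Finset.mem_filter, mem_Fam]
      refine ⟨⟨?_, ?_, ?_⟩, Finset.mem_insert_self _ _⟩
      · intro j hj
        rcases Finset.mem_insert.mp hj with h | h
        · simp only [Finset.mem_Icc]; omega
        · have := hsub h; simp only [Finset.mem_Icc] at this ⊢; omega
      · rw [Finset.card_insert_of_notMem hnot, hc]
      · intro i hi j hj hij
        rcases Finset.mem_insert.mp hi with h1 | h1 <;>
          rcases Finset.mem_insert.mp hj with h2 | h2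
        · omega
        · have := hsub h2; simp only [Finset.mem_Icc] at this; omega
        · have := hsub h1; simp only [Finset.mem_Icc] at this; omega
        · exact hadj i h1 j h2 hij
    · intro s hs
      simp only [Finset.mem_filter] at hs
      exact Finset.insert_erase hs.2
    · intro t ht
      rw [mem_Fam] at ht
      obtain ⟨hsub, _, _⟩ := ht
      have hnot : n+1 ∉ t := fun hc' => by
        have := hsub hc'; simp only [Finset.mem_Icc] at this; omega
      exact Finset.erase_insert hnot
    · intro s hs
      simp only [Finset.mem_filter, mem_Fam] at hs
      obtain ⟨⟨hsub, hc, hadj⟩, hmem⟩ := hs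
      have hsum : ∑ j ∈ s.erase (n+1), (2*j+1) + (2*(n+1)+1) = ∑ j ∈ s, (2*j+1) :=
        Finset.sum_erase_add s _ hmem
      have hsub' : s.erase (n+1) ⊆ Finset.Icc 1 (n-1) := by
        intro j hj
        have hj1 := Finset.mem_of_mem_erase hj
        have hj2 := Finset.ne_of_mem_erase hj
        have h1 := hsub hj1
        have h3 : j ≠ n := fun e => by
          have := hadj j hj1 (n+1) hmem (by omega); omega
        simp only [Finset.mem_Icc] at h1 ⊢
        omega
      have hb := csum_bound' n _ hsub'
        (fun i hi j hj => hadj i (Finset.mem_of_mem_erase hi) j (Finset.mem_of_mem_erase hj))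
      congr 1
      have e1 : (n+2) * (n+2+1) = n*n + 5*n + 6 := by ring
      have e2 : n * (n+1) = n*n + n := by ring
      omega
  rw [hA, hB]; ring

theorem tridiag_main
    (P : ℕ → Polynomial (Polynomial ℤ))
    (h0 : P 0 = 1) (h1 : P 1 = C X * X)
    (hrec : ∀ n : ℕ, P (n + 2) = C (X ^ (n + 2)) * X * P (n + 1) - P n) :
    ∀ n : ℕ, P n = ∑ k ∈ Finset.range (n / 2 + 1),
      (-1) ^ k * C (aP n k) * X ^ (n - 2 * k) := by
  intro n
  induction n using Nat.strong_induction_on with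
  | _ n IH =>
    match n with
    | 0 =>
      rw [h0, Finset.sum_range_one]
      simp [aP_zero]
    | 1 =>
      rw [h1, Finset.sum_range_one]
      simp [aP_zero]
    | (n+2) =>
      have ih1 := IH (n+1) (by omega)
      have ih0 := IH n (by omega)
      rw [hrec n, ih1, ih0]
      -- define shorthand functions
      set g : ℕ → Polynomial (Polynomial ℤ) :=
        fun k => (-1)^k * C (X^(n+2) * aP (n+1) k) * X^(n+2-2*k) with hg
      set T : ℕ → Polynomial (Polynomial ℤ) :=
        fun k => (-1)^k * C (aP (n+2) k) * X^(n+2-2*k) with hT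
      have S1a : C (X^(n+2) : Polynomial ℤ) * X *
          (∑ k ∈ Finset.range ((n+1)/2 + 1),
            (-1)^k * C (aP (n+1) k) * X^(n+1-2*k))
          = ∑ k ∈ Finset.range ((n+1)/2 + 1), g k := by
        rw [Finset.mul_sum]
        apply Finset.sum_congr rfl
        intro k hk
        rw [Finset.mem_range] at hk
        have hx : (X : Polynomial (Polynomial ℤ))^(n+2-2*k) = X^(n+1-2*k) * X := by
          rw [← pow_succ]
          congr 1
          omega
        simp only [hg, map_mul, hx]
        ring
      have S1b : ∑ k ∈ Finset.range ((n+1)/2 + 1), g k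
          = ∑ k ∈ Finset.range (n/2 + 2), g k := by
        apply Finset.sum_subset
        · intro k hk
          simp only [Finset.mem_range] at hk ⊢
          omega
        · intro k _ hk
          simp only [Finset.mem_range, not_lt] at hk
          rw [hg]
          simp only
          rw [aP_vanish (n+1) k (by omega)]
          simp
      have goalshape : ∑ k ∈ Finset.range ((n+2)/2 + 1),
          (-1)^k * C (aP (n+2) k) * X^(n+2-2*k) = ∑ k ∈ Finset.range (n/2 + 2), T k := by
        apply Finset.sum_congr
        · congr 1; omega
        · intro k _; rw [hT]
      rw [S1a, S1b, goalshape]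
      rw [Finset.sum_range_succ' T (n/2 + 1), Finset.sum_range_succ' g (n/2 + 1)]
      have h0' : T 0 = g 0 := by
        rw [hT, hg]
        simp only
        rw [aP_rec0]
      have hterm : ∀ k ∈ Finset.range (n/2 + 1),
          T (k+1) = g (k+1) - (-1)^k * C (aP n k) * X^(n-2*k) := by
        intro k hk
        rw [Finset.mem_range] at hk
        rw [hT, hg]
        simp only
        rw [aP_rec n k, map_add]
        have hx : n+2-2*(k+1) = n-2*k := by omega
        rw [hx, pow_succ]
        ring
      rw [Finset.sum_congr rfl hterm, Finset.sum_sub_distrib, h0']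
      ring

theorem tridiagonal_poly_coeff_formula
    (P : ℕ → Polynomial (Polynomial ℤ))
    (h0 : P 0 = 1) (h1 : P 1 = C X * X)
    (hrec : ∀ n : ℕ, P (n + 2) = C (X ^ (n + 2)) * X * P (n + 1) - P n) :
    ∀ n : ℕ, P n = ∑ k ∈ Finset.range (n / 2 + 1),
      (-1) ^ k *
        C (∑ s ∈ (Finset.Icc 1 (n - 1)).powerset.filter
              (fun s => s.card = k ∧ ∀ i ∈ s, ∀ j ∈ s, i < j → i + 1 < j),
            (X : Polynomial ℤ) ^ (n * (n + 1) / 2 - ∑ j ∈ s, (2 * j + 1))) *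
        X ^ (n - 2 * k) := by
  exact tridiag_main P h0 h1 hrec
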